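/- Let μ_1,…,μ_k be probability measures on ℝ with finite second moments and let π_1,…,π_k > 0 with Σ_{s=1}^k π_s = 1, and let ν̄ be the pushforward of Unif(0,1) under u ↦ Σ_{s=1}^k π_s F_{μ_s}⁻¹(u). Then the barycenter value admits the explicit expression Σ_{s=1}^k π_s W₂²(μ_s, ν̄) = Σ_{s=1}^k π_s ∫₀¹ |F_{μ_s}⁻¹(u) − Σ_{t=1}^k π_t F_{μ_t}⁻¹(u)|² du. -/

import Mathlib

open MeasureTheory ProbabilityTheory

/-- Squared 2-Wasserstein distance between measures on ℝ: infimum of ∫|x−y|² dγ over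
couplings γ of P and Q. -/
noncomputable def W2sq (P Q : Measure ℝ) : ℝ :=
  sInf { c : ℝ | ∃ γ : Measure (ℝ × ℝ),
    γ.map Prod.fst = P ∧ γ.map Prod.snd = Q ∧ c = ∫ z, (z.1 - z.2) ^ 2 ∂γ }

/-- CDF of a measure on ℝ. -/
noncomputable def cdf' (μ : Measure ℝ) (x : ℝ) : ℝ := (μ (Set.Iic x)).toReal

/-- Quantile function of a measure on ℝ: `F_μ⁻¹(u) = inf {x : F_μ(x) ≥ u}`. -/
noncomputable def quantile' (μ : Measure ℝ) (u : ℝ) : ℝ := sInf { x : ℝ | u ≤ cdf' μ x }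

/-- Uniform distribution on (0,1): Lebesgue measure restricted to (0,1). -/
noncomputable def unif01 : Measure ℝ := volume.restrict (Set.Ioo 0 1)

open Set Filter Topology ENNReal NNReal

/-! ### Auxiliary development: quantile functions -/

section Quantile
variable {μ : Measure ℝ} [IsProbabilityMeasure μ] {u x : ℝ}

lemma cdf'_mono : Monotone (cdf' μ) := fun a b h =>
  ENNReal.toReal_mono (measure_ne_top μ _) (measure_mono (Iic_subset_Iic.2 h))

lemma cdf'_nonneg : 0 ≤ cdf' μ x := ENNReal.toReal_nonneg

lemma cdf'_le_one : cdf' μ x ≤ 1 := by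
  have := prob_le_one (μ := μ) (s := Iic x)
  simpa [cdf'] using ENNReal.toReal_mono ENNReal.one_ne_top this

lemma measure_Iic_eq : μ (Iic x) = ENNReal.ofReal (cdf' μ x) :=
  (ENNReal.ofReal_toReal (measure_ne_top μ _)).symm

lemma exists_cdf'_lt (hu : 0 < u) : ∃ y : ℝ, cdf' μ y < u := by
  have hint : ⋂ n : ℕ, Iic (-(n : ℝ)) = ∅ := by
    ext x; simp only [mem_iInter, mem_Iic, mem_empty_iff_false, iff_false, not_forall, not_le]
    obtain ⟨n, hn⟩ := exists_nat_gt (-x)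
    exact ⟨n, by linarith⟩
  have h : Tendsto (fun n : ℕ => μ (Iic (-(n : ℝ)))) atTop (𝓝 0) := by
    have := tendsto_measure_iInter_atTop (μ := μ)
      (s := fun n : ℕ => Iic (-(n : ℝ)))
      (fun n => measurableSet_Iic.nullMeasurableSet)
      (fun m n hmn => Iic_subset_Iic.2 (by exact_mod_cast neg_le_neg (by exact_mod_cast hmn)))
      ⟨0, measure_ne_top μ _⟩
    simpa [hint, Function.comp_def] using this
  have h' : Tendsto (fun n : ℕ => cdf' μ (-(n : ℝ))) atTop (𝓝 0) := by
    have := (ENNReal.tendsto_toReal (by norm_num)).comp h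
    simpa [cdf', Function.comp_def] using this
  obtain ⟨n, hn⟩ := (h'.eventually (eventually_lt_nhds hu)).exists
  exact ⟨-(n : ℝ), hn⟩

lemma exists_le_cdf' (hu : u < 1) : ∃ y : ℝ, u ≤ cdf' μ y := by
  have h : Tendsto (fun x : ℝ => μ (Iic x)) atTop (𝓝 1) := by
    simpa using tendsto_measure_Iic_atTop (μ := μ)
  have h' : Tendsto (cdf' μ) atTop (𝓝 1) := by
    have := (ENNReal.tendsto_toReal ENNReal.one_ne_top).comp h
    exact (by simpa [Function.comp_def] using this : Tendsto (fun x => (μ (Iic x)).toReal) atTop (𝓝 1))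
  obtain ⟨y, hy⟩ := (h'.eventually (eventually_gt_nhds hu)).exists
  exact ⟨y, hy.le⟩

lemma quantile_set_nonempty (hu : u < 1) : {x : ℝ | u ≤ cdf' μ x}.Nonempty :=
  exists_le_cdf' hu

lemma quantile_set_bddBelow (hu : 0 < u) : BddBelow {x : ℝ | u ≤ cdf' μ x} := by
  obtain ⟨y, hy⟩ := exists_cdf'_lt (μ := μ) hu
  exact ⟨y, fun z hz => by
    by_contra h
    push_neg at h
    exact absurd (le_trans hz (cdf'_mono h.le)) (not_le.2 hy)⟩

lemma cdf'_right_continuous_le (h : ∀ y > x, u ≤ cdf' μ y) : u ≤ cdf' μ x := by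
  have hbi : ⋂ r, ⋂ (_ : r > x), Iic r = Iic x := by
    ext y; simp only [mem_iInter, mem_Iic]
    constructor
    · intro hy
      by_contra hxy
      push_neg at hxy
      obtain ⟨r, hr1, hr2⟩ := exists_between hxy
      exact absurd (hy r hr1) (not_le.2 hr2)
    · intro hy r hr; exact hy.trans hr.le
  have ht : Tendsto (fun r => μ (Iic r)) (𝓝[>] x) (𝓝 (μ (Iic x))) := by
    have := tendsto_measure_biInter_gt (μ := μ) (s := fun r : ℝ => Iic r) (a := x)
      (fun r _ => measurableSet_Iic.nullMeasurableSet)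
      (fun i j _ hij => Iic_subset_Iic.2 hij)
      ⟨x + 1, by norm_num, measure_ne_top μ _⟩
    rw [hbi] at this
    exact this
  have ht' : Tendsto (cdf' μ) (𝓝[>] x) (𝓝 (cdf' μ x)) := by
    have := (ENNReal.tendsto_toReal (measure_ne_top μ (Iic x))).comp ht
    exact this
  exact ge_of_tendsto ht' (eventually_nhdsWithin_of_forall (fun y hy => h y hy))

lemma quantile'_le_iff (hu0 : 0 < u) (hu1 : u < 1) :
    quantile' μ u ≤ x ↔ u ≤ cdf' μ x := by
  constructor
  · intro h
    apply cdf'_right_continuous_le (μ := μ)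
    intro y hy
    have : sInf {x : ℝ | u ≤ cdf' μ x} < y := lt_of_le_of_lt h hy
    obtain ⟨z, hz, hzy⟩ := exists_lt_of_csInf_lt (quantile_set_nonempty hu1) this
    exact le_trans hz (cdf'_mono hzy.le)
  · intro h
    exact csInf_le (quantile_set_bddBelow hu0) h

lemma quantile'_monotoneOn : MonotoneOn (quantile' μ) (Ioo 0 1) := by
  intro u hu v hv huv
  exact csInf_le_csInf (quantile_set_bddBelow hu.1) (quantile_set_nonempty hv.2)
    (fun x hx => le_trans huv hx)

end Quantile

/-! ### A measurable version of the quantile function -/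

noncomputable def qf (μ : Measure ℝ) (u : ℝ) : ℝ :=
  if u ∈ Ioo (0:ℝ) 1 then quantile' μ u else 0

section QF
variable {μ : Measure ℝ} [IsProbabilityMeasure μ]

instance : IsProbabilityMeasure unif01 :=
  ⟨by simp [unif01, Real.volume_Ioo]⟩

lemma qf_measurable : Measurable (qf μ) := by
  apply measurable_of_Iic
  intro x
  by_cases hx : (0:ℝ) ≤ x
  · have : qf μ ⁻¹' Iic x = (Ioo 0 1 ∩ Iic (cdf' μ x)) ∪ (Ioo 0 1)ᶜ := by
      ext u
      by_cases hu : u ∈ Ioo (0:ℝ) 1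
      · simp only [mem_preimage, mem_Iic, qf, if_pos hu, mem_union, mem_inter_iff, hu,
          true_and, mem_compl_iff, not_true_eq_false, or_false]
        exact quantile'_le_iff hu.1 hu.2
      · simp [qf, if_neg hu, hu, hx]
    rw [this]
    exact ((measurableSet_Ioo.inter measurableSet_Iic).union measurableSet_Ioo.compl)
  · have : qf μ ⁻¹' Iic x = Ioo 0 1 ∩ Iic (cdf' μ x) := by
      ext u
      by_cases hu : u ∈ Ioo (0:ℝ) 1
      · simp only [mem_preimage, mem_Iic, qf, if_pos hu, mem_inter_iff, hu, true_and]
        exact quantile'_le_iff hu.1 hu.2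
      · have h0 : qf μ u = 0 := if_neg hu
        simp only [mem_preimage, mem_Iic, h0, mem_inter_iff, hu, false_and, iff_false, not_le]
        exact lt_of_not_ge hx
    rw [this]
    exact measurableSet_Ioo.inter measurableSet_Iic

lemma qf_ae_eq : qf μ =ᵐ[unif01] quantile' μ := by
  unfold unif01
  filter_upwards [ae_restrict_mem measurableSet_Ioo] with u hu
  simp [qf, hu]

lemma qf_monotoneOn : MonotoneOn (qf μ) (Ioo 0 1) := by
  intro u hu v hv huv
  simp only [qf, if_pos hu, if_pos hv]
  exact quantile'_monotoneOn hu hv huv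

lemma map_qf : unif01.map (qf μ) = μ := by
  refine Measure.ext_of_Iic _ _ (fun x => ?_)
  rw [Measure.map_apply qf_measurable measurableSet_Iic, unif01,
    Measure.restrict_apply (qf_measurable measurableSet_Iic)]
  have hset : qf μ ⁻¹' Iic x ∩ Ioo 0 1 = Iic (cdf' μ x) ∩ Ioo 0 1 := by
    ext u
    simp only [mem_inter_iff, mem_preimage, mem_Iic, and_congr_left_iff]
    intro hu
    simp only [qf, if_pos hu]
    exact quantile'_le_iff hu.1 hu.2
  rw [hset, measure_Iic_eq]
  set c := cdf' μ x with hc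
  have hc0 : 0 ≤ c := cdf'_nonneg
  have hc1 : c ≤ 1 := cdf'_le_one
  rcases lt_or_eq_of_le hc1 with h1 | h1
  · have : Iic c ∩ Ioo 0 1 = Ioc 0 c := by
      ext u
      simp only [mem_inter_iff, mem_Iic, mem_Ioo, mem_Ioc]
      constructor
      · rintro ⟨h, h2, _⟩; exact ⟨h2, h⟩
      · rintro ⟨h2, h⟩; exact ⟨h, h2, lt_of_le_of_lt h h1⟩
    rw [this, Real.volume_Ioc, sub_zero]
  · have : Iic c ∩ Ioo 0 1 = Ioo 0 1 := by
      apply inter_eq_right.2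
      intro u hu
      simp only [mem_Iic]
      rw [← h1] at hu
      exact hu.2.le
    rw [this, Real.volume_Ioo, sub_zero, ← h1]

lemma map_quantile' : unif01.map (quantile' μ) = μ := by
  rw [← Measure.map_congr (qf_ae_eq (μ := μ))]
  exact map_qf

lemma memLp_qf (h2 : MemLp id 2 μ) : MemLp (qf μ) 2 unif01 := by
  have h2' := h2
  rw [← map_qf (μ := μ)] at h2'
  have := (memLp_map_measure_iff aestronglyMeasurable_id qf_measurable.aemeasurable).1 h2'
  simpa using this

end QF
noncomputable def gg (x t : ℝ) : ℝ := (if t < x then 1 else 0) - (if t < 0 then 1 else 0)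

lemma gg_nonneg_case {x : ℝ} (hx : 0 ≤ x) :
    gg x = (Ico (0:ℝ) x).indicator (fun _ => (1:ℝ)) := by
  funext t
  simp only [gg, indicator_apply, mem_Ico]
  by_cases h1 : t < 0
  · simp [h1, lt_of_lt_of_le h1 hx, not_le.2 h1]
  · by_cases h2 : t < x <;> simp [h1, h2, not_lt.1 h1]

lemma gg_neg_case {x : ℝ} (hx : x < 0) :
    gg x = fun t => -((Ico x 0).indicator (fun _ => (1:ℝ)) t) := by
  funext t
  simp only [gg, indicator_apply, mem_Ico]
  by_cases h1 : t < x
  · simp [h1, h1.trans hx, not_le.2 h1]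
  · by_cases h2 : t < 0 <;> simp [h1, h2, not_lt.1 h1]

lemma integral_gg (x : ℝ) : ∫ t, gg x t = x := by
  rcases le_or_gt 0 x with hx | hx
  · rw [gg_nonneg_case hx, integral_indicator_const (1:ℝ) measurableSet_Ico]
    simp [Real.volume_Ico, ENNReal.toReal_ofReal hx, hx]
  · rw [gg_neg_case hx]
    rw [integral_neg, integral_indicator_const (1:ℝ) measurableSet_Ico]
    simp [Real.volume_Ico, zero_sub, ENNReal.toReal_ofReal (by linarith : (0:ℝ) ≤ -x),
      max_eq_left (by linarith : (0:ℝ) ≤ -x)]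

lemma lintegral_gg (x : ℝ) : ∫⁻ t, ‖gg x t‖₊ = ENNReal.ofReal |x| := by
  rcases le_or_gt 0 x with hx | hx
  · have : (fun t => (‖gg x t‖₊ : ℝ≥0∞)) = (Ico (0:ℝ) x).indicator (fun _ => 1) := by
      funext t
      rw [gg_nonneg_case hx]
      by_cases h : t ∈ Ico (0:ℝ) x <;> simp [indicator_apply, h]
    rw [this, lintegral_indicator_const measurableSet_Ico, Real.volume_Ico]
    simp [sub_zero, abs_of_nonneg hx]
  · have : (fun t => (‖gg x t‖₊ : ℝ≥0∞)) = (Ico x 0).indicator (fun _ => 1) := by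
      funext t
      rw [gg_neg_case hx]
      by_cases h : t ∈ Ico x 0 <;> simp [indicator_apply, h]
    rw [this, lintegral_indicator_const measurableSet_Ico, Real.volume_Ico]
    simp [zero_sub, abs_of_neg hx]

lemma gg_meas (x : ℝ) : Measurable (gg x) := by
  unfold gg
  exact Measurable.sub
    (Measurable.ite measurableSet_Iio measurable_const measurable_const)
    (Measurable.ite measurableSet_Iio measurable_const measurable_const)

lemma measurable_gg_nn (x : ℝ) : Measurable fun t => (‖gg x t‖₊ : ℝ≥0∞) :=
  (gg_meas x).enorm

lemma gg_prod_meas :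
    Measurable (fun q : (ℝ × ℝ) × (ℝ × ℝ) => gg q.1.1 q.2.1 * gg q.1.2 q.2.2) := by
  have m1 : Measurable fun q : (ℝ × ℝ) × (ℝ × ℝ) => gg q.1.1 q.2.1 := by
    unfold gg
    exact Measurable.sub
      (Measurable.ite (measurableSet_lt measurable_snd.fst measurable_fst.fst)
        measurable_const measurable_const)
      (Measurable.ite (measurableSet_lt measurable_snd.fst measurable_const)
        measurable_const measurable_const)
  have m2 : Measurable fun q : (ℝ × ℝ) × (ℝ × ℝ) => gg q.1.2 q.2.2 := by
    unfold gg
    exact Measurable.sub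
      (Measurable.ite (measurableSet_lt measurable_snd.snd measurable_fst.snd)
        measurable_const measurable_const)
      (Measurable.ite (measurableSet_lt measurable_snd.snd measurable_const)
        measurable_const measurable_const)
  exact m1.mul m2

lemma integrable_ggprod (γ : Measure (ℝ × ℝ)) [IsProbabilityMeasure γ]
    (m1 : Integrable (fun z : ℝ × ℝ => z.1 ^ 2) γ)
    (m2 : Integrable (fun z : ℝ × ℝ => z.2 ^ 2) γ) :
    Integrable (fun q : (ℝ × ℝ) × (ℝ × ℝ) => gg q.1.1 q.2.1 * gg q.1.2 q.2.2)
      (γ.prod (volume : Measure (ℝ × ℝ))) := by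
  refine ⟨gg_prod_meas.aestronglyMeasurable, ?_⟩
  rw [hasFiniteIntegral_def]
  have hmeas : AEMeasurable
      (fun q : (ℝ × ℝ) × (ℝ × ℝ) => (‖gg q.1.1 q.2.1 * gg q.1.2 q.2.2‖₊ : ℝ≥0∞))
      (γ.prod (volume : Measure (ℝ × ℝ))) := gg_prod_meas.enorm.aemeasurable
  simp only [enorm_eq_nnnorm]
  rw [lintegral_prod _ hmeas]
  have hinner : ∀ z : ℝ × ℝ,
      (∫⁻ p : ℝ × ℝ, (‖gg z.1 p.1 * gg z.2 p.2‖₊ : ℝ≥0∞))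
        = ENNReal.ofReal (|z.1| * |z.2|) := by
    intro z
    have : ∀ p : ℝ × ℝ, (‖gg z.1 p.1 * gg z.2 p.2‖₊ : ℝ≥0∞)
        = (‖gg z.1 p.1‖₊ : ℝ≥0∞) * (‖gg z.2 p.2‖₊ : ℝ≥0∞) := by
      intro p; rw [nnnorm_mul]; push_cast; ring
    simp_rw [this]
    rw [Measure.volume_eq_prod, lintegral_prod_mul
      (measurable_gg_nn z.1).aemeasurable (measurable_gg_nn z.2).aemeasurable]
    rw [lintegral_gg, lintegral_gg, ← ENNReal.ofReal_mul (abs_nonneg _)]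
  simp_rw [hinner]
  have hb : ∀ z : ℝ × ℝ, ENNReal.ofReal (|z.1| * |z.2|)
      ≤ ENNReal.ofReal (z.1 ^ 2) + ENNReal.ofReal (z.2 ^ 2) := by
    intro z
    rw [← ENNReal.ofReal_add (sq_nonneg _) (sq_nonneg _)]
    apply ENNReal.ofReal_le_ofReal
    nlinarith [sq_nonneg (|z.1| - |z.2|), sq_abs z.1, sq_abs z.2]
  calc ∫⁻ z, ENNReal.ofReal (|z.1| * |z.2|) ∂γ
      ≤ ∫⁻ z : ℝ × ℝ, (ENNReal.ofReal (z.1 ^ 2) + ENNReal.ofReal (z.2 ^ 2)) ∂γ :=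
        lintegral_mono hb
    _ = (∫⁻ z : ℝ × ℝ, ENNReal.ofReal (z.1 ^ 2) ∂γ)
        + ∫⁻ z : ℝ × ℝ, ENNReal.ofReal (z.2 ^ 2) ∂γ := by
        apply lintegral_add_left
        exact (measurable_fst.pow_const 2).ennreal_ofReal
    _ < ⊤ := by
        apply ENNReal.add_lt_top.2
        constructor
        · have h := m1.hasFiniteIntegral
          rw [hasFiniteIntegral_def] at h
          have e : ∀ a : ℝ × ℝ, ‖a.1 ^ 2‖ₑ = ENNReal.ofReal (a.1 ^ 2) :=
            fun a => Real.enorm_eq_ofReal (sq_nonneg _)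
          simpa only [e] using h
        · have h := m2.hasFiniteIntegral
          rw [hasFiniteIntegral_def] at h
          have e : ∀ a : ℝ × ℝ, ‖a.2 ^ 2‖ₑ = ENNReal.ofReal (a.2 ^ 2) :=
            fun a => Real.enorm_eq_ofReal (sq_nonneg _)
          simpa only [e] using h

section Hoeffding
variable (γ : Measure (ℝ × ℝ)) [IsProbabilityMeasure γ]

lemma integral_mul_eq
    (m1 : Integrable (fun z : ℝ × ℝ => z.1 ^ 2) γ)
    (m2 : Integrable (fun z : ℝ × ℝ => z.2 ^ 2) γ) :
    ∫ z, z.1 * z.2 ∂γ = ∫ p : ℝ × ℝ, (∫ z, gg z.1 p.1 * gg z.2 p.2 ∂γ) := by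
  have key : ∀ z : ℝ × ℝ, z.1 * z.2 = ∫ p : ℝ × ℝ, gg z.1 p.1 * gg z.2 p.2 := by
    intro z
    rw [Measure.volume_eq_prod, integral_prod_mul, integral_gg, integral_gg]
  calc ∫ z, z.1 * z.2 ∂γ
      = ∫ z, (∫ p : ℝ × ℝ, gg z.1 p.1 * gg z.2 p.2) ∂γ := by
        apply integral_congr_ae (Eventually.of_forall key)
    _ = ∫ p : ℝ × ℝ, (∫ z, gg z.1 p.1 * gg z.2 p.2 ∂γ) :=
        integral_integral_swap (integrable_ggprod γ m1 m2)

lemma integrable_H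
    (m1 : Integrable (fun z : ℝ × ℝ => z.1 ^ 2) γ)
    (m2 : Integrable (fun z : ℝ × ℝ => z.2 ^ 2) γ) :
    Integrable (fun p : ℝ × ℝ => ∫ z, gg z.1 p.1 * gg z.2 p.2 ∂γ)
      (volume : Measure (ℝ × ℝ)) :=
  (integrable_ggprod γ m1 m2).integral_prod_right

lemma H_eq (P Q : Measure ℝ)
    (hfst : γ.map Prod.fst = P) (hsnd : γ.map Prod.snd = Q) (t s : ℝ) :
    ∫ z, gg z.1 t * gg z.2 s ∂γ
      = (γ {z : ℝ × ℝ | t < z.1 ∧ s < z.2}).toReal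
        - (if s < 0 then (P (Ioi t)).toReal else 0)
        - (if t < 0 then (Q (Ioi s)).toReal else 0)
        + (if t < 0 then 1 else 0) * (if s < 0 then 1 else 0) := by
  have hA : MeasurableSet {z : ℝ × ℝ | t < z.1} :=
    measurableSet_lt measurable_const measurable_fst
  have hB : MeasurableSet {z : ℝ × ℝ | s < z.2} :=
    measurableSet_lt measurable_const measurable_snd
  have hAB : {z : ℝ × ℝ | t < z.1 ∧ s < z.2}
      = {z : ℝ × ℝ | t < z.1} ∩ {z : ℝ × ℝ | s < z.2} := rfl
  have key : ∀ z : ℝ × ℝ, gg z.1 t * gg z.2 s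
      = ({z : ℝ × ℝ | t < z.1} ∩ {z : ℝ × ℝ | s < z.2}).indicator (fun _ => (1:ℝ)) z
        - (if s < 0 then (1:ℝ) else 0) * ({z : ℝ × ℝ | t < z.1}).indicator (fun _ => (1:ℝ)) z
        - (if t < 0 then (1:ℝ) else 0) * ({z : ℝ × ℝ | s < z.2}).indicator (fun _ => (1:ℝ)) z
        + (if t < 0 then (1:ℝ) else 0) * (if s < 0 then (1:ℝ) else 0) := by
    intro z
    simp only [gg, indicator_apply, mem_inter_iff, mem_setOf_eq]
    by_cases h1 : t < z.1 <;> by_cases h2 : s < z.2 <;> by_cases h3 : t < 0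
      <;> by_cases h4 : s < 0 <;> simp [h1, h2, h3, h4] <;> ring
  have iAB : Integrable
      (fun z => ({z : ℝ × ℝ | t < z.1} ∩ {z : ℝ × ℝ | s < z.2}).indicator (fun _ => (1:ℝ)) z) γ :=
    (integrable_const (1:ℝ)).indicator (hA.inter hB)
  have iA : Integrable (fun z => ({z : ℝ × ℝ | t < z.1}).indicator (fun _ => (1:ℝ)) z) γ :=
    (integrable_const (1:ℝ)).indicator hA
  have iB : Integrable (fun z => ({z : ℝ × ℝ | s < z.2}).indicator (fun _ => (1:ℝ)) z) γ :=
    (integrable_const (1:ℝ)).indicator hB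
  have i2 : Integrable (fun z : ℝ × ℝ =>
      ({z : ℝ × ℝ | t < z.1} ∩ {z : ℝ × ℝ | s < z.2}).indicator (fun _ => (1:ℝ)) z
        - (if s < 0 then (1:ℝ) else 0) * ({z : ℝ × ℝ | t < z.1}).indicator (fun _ => (1:ℝ)) z) γ :=
    iAB.sub (iA.const_mul _)
  have i3 : Integrable (fun z : ℝ × ℝ =>
      ({z : ℝ × ℝ | t < z.1} ∩ {z : ℝ × ℝ | s < z.2}).indicator (fun _ => (1:ℝ)) z
        - (if s < 0 then (1:ℝ) else 0) * ({z : ℝ × ℝ | t < z.1}).indicator (fun _ => (1:ℝ)) z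
        - (if t < 0 then (1:ℝ) else 0) * ({z : ℝ × ℝ | s < z.2}).indicator (fun _ => (1:ℝ)) z) γ :=
    i2.sub (iB.const_mul _)
  rw [integral_congr_ae (Eventually.of_forall key)]
  rw [integral_add i3 (integrable_const _),
    integral_sub i2 (iB.const_mul _),
    integral_sub iAB (iA.const_mul _),
    integral_const_mul, integral_const_mul, integral_const,
    integral_indicator_const (1:ℝ) (hA.inter hB),
    integral_indicator_const (1:ℝ) hA, integral_indicator_const (1:ℝ) hB]
  have hPA : γ {z : ℝ × ℝ | t < z.1} = P (Ioi t) := by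
    rw [← hfst, Measure.map_apply measurable_fst measurableSet_Ioi]; rfl
  have hQB : γ {z : ℝ × ℝ | s < z.2} = Q (Ioi s) := by
    rw [← hsnd, Measure.map_apply measurable_snd measurableSet_Ioi]; rfl
  simp only [measureReal_def]
  rw [hAB, hPA, hQB]
  simp only [measure_univ, smul_eq_mul, mul_one, ENNReal.toReal_one]
  split_ifs <;> ring

lemma hoeffding_le (Γ : Measure (ℝ × ℝ)) [IsProbabilityMeasure Γ]
    (P Q : Measure ℝ)
    (hγ1 : γ.map Prod.fst = P) (hγ2 : γ.map Prod.snd = Q)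
    (hΓ1 : Γ.map Prod.fst = P) (hΓ2 : Γ.map Prod.snd = Q)
    (m1 : Integrable (fun z : ℝ × ℝ => z.1 ^ 2) γ)
    (m2 : Integrable (fun z : ℝ × ℝ => z.2 ^ 2) γ)
    (M1 : Integrable (fun z : ℝ × ℝ => z.1 ^ 2) Γ)
    (M2 : Integrable (fun z : ℝ × ℝ => z.2 ^ 2) Γ)
    (hmin : ∀ t s : ℝ, Γ {z : ℝ × ℝ | t < z.1 ∧ s < z.2} = min (P (Ioi t)) (Q (Ioi s))) :
    ∫ z, z.1 * z.2 ∂γ ≤ ∫ z, z.1 * z.2 ∂Γ := by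
  rw [integral_mul_eq γ m1 m2, integral_mul_eq Γ M1 M2]
  apply integral_mono (integrable_H γ m1 m2) (integrable_H Γ M1 M2)
  intro p
  dsimp only
  rw [H_eq γ P Q hγ1 hγ2 p.1 p.2, H_eq Γ P Q hΓ1 hΓ2 p.1 p.2]
  have hle : γ {z : ℝ × ℝ | p.1 < z.1 ∧ p.2 < z.2} ≤ Γ {z : ℝ × ℝ | p.1 < z.1 ∧ p.2 < z.2} := by
    rw [hmin]
    apply le_min
    · calc γ {z : ℝ × ℝ | p.1 < z.1 ∧ p.2 < z.2} ≤ γ {z : ℝ × ℝ | p.1 < z.1} :=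
          measure_mono (fun z hz => hz.1)
      _ = P (Ioi p.1) := by
          rw [← hγ1, Measure.map_apply measurable_fst measurableSet_Ioi]; rfl
    · calc γ {z : ℝ × ℝ | p.1 < z.1 ∧ p.2 < z.2} ≤ γ {z : ℝ × ℝ | p.2 < z.2} :=
          measure_mono (fun z hz => hz.2)
      _ = Q (Ioi p.2) := by
          rw [← hγ2, Measure.map_apply measurable_snd measurableSet_Ioi]; rfl
  have hR : (γ {z : ℝ × ℝ | p.1 < z.1 ∧ p.2 < z.2}).toReal
      ≤ (Γ {z : ℝ × ℝ | p.1 < z.1 ∧ p.2 < z.2}).toReal :=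
    ENNReal.toReal_mono (measure_ne_top Γ _) hle
  linarith

end Hoeffding

/-! ### Comonotone couplings -/

lemma upward_comparable {U V : Set ℝ}
    (hU : ∀ ⦃a b : ℝ⦄, a ∈ U → b ∈ Ioo (0:ℝ) 1 → a ≤ b → b ∈ U)
    (hV : ∀ ⦃a b : ℝ⦄, a ∈ V → b ∈ Ioo (0:ℝ) 1 → a ≤ b → b ∈ V)
    (hUs : U ⊆ Ioo 0 1) (hVs : V ⊆ Ioo 0 1) : U ⊆ V ∨ V ⊆ U := by
  by_cases h : U ⊆ V
  · left; exact h
  · right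
    rw [not_subset] at h
    obtain ⟨x, hxU, hxV⟩ := h
    intro y hy
    rcases le_total y x with hyx | hxy
    · exact absurd (hV hy (hUs hxU) hyx) hxV
    · exact hU hxU (hVs hy) hxy

lemma comonotone_min (f g : ℝ → ℝ) (hf : Measurable f) (hg : Measurable g)
    (hfm : MonotoneOn f (Ioo 0 1)) (hgm : MonotoneOn g (Ioo 0 1)) (t s : ℝ) :
    (unif01.map (fun u => (f u, g u))) {z : ℝ × ℝ | t < z.1 ∧ s < z.2}
      = min ((unif01.map f) (Ioi t)) ((unif01.map g) (Ioi s)) := by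
  have hAB : MeasurableSet {z : ℝ × ℝ | t < z.1 ∧ s < z.2} :=
    (measurableSet_lt measurable_const measurable_fst).inter
      (measurableSet_lt measurable_const measurable_snd)
  rw [Measure.map_apply (hf.prodMk hg) hAB, Measure.map_apply hf measurableSet_Ioi,
    Measure.map_apply hg measurableSet_Ioi]
  unfold unif01
  rw [Measure.restrict_apply ((hf.prodMk hg) hAB),
    Measure.restrict_apply (hf measurableSet_Ioi),
    Measure.restrict_apply (hg measurableSet_Ioi)]
  set U := f ⁻¹' Ioi t ∩ Ioo 0 1 with hU
  set V := g ⁻¹' Ioi s ∩ Ioo 0 1 with hV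
  have hset : (fun u => (f u, g u)) ⁻¹' {z : ℝ × ℝ | t < z.1 ∧ s < z.2} ∩ Ioo 0 1
      = U ∩ V := by
    ext u
    simp only [hU, hV, mem_inter_iff, mem_preimage, mem_setOf_eq, mem_Ioi]
    tauto
  rw [hset]
  have hUup : ∀ ⦃a b : ℝ⦄, a ∈ U → b ∈ Ioo (0:ℝ) 1 → a ≤ b → b ∈ U := by
    intro a b ha hb hab
    exact ⟨lt_of_lt_of_le ha.1 (hfm ha.2 hb hab), hb⟩
  have hVup : ∀ ⦃a b : ℝ⦄, a ∈ V → b ∈ Ioo (0:ℝ) 1 → a ≤ b → b ∈ V := by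
    intro a b ha hb hab
    exact ⟨lt_of_lt_of_le ha.1 (hgm ha.2 hb hab), hb⟩
  rcases upward_comparable hUup hVup inter_subset_right inter_subset_right with h | h
  · rw [inter_eq_left.2 h]
    exact (min_eq_left (measure_mono h)).symm
  · rw [inter_eq_right.2 h]
    exact (min_eq_right (measure_mono h)).symm

/-! ### Cost expansion -/

lemma cost_expand (P Q : Measure ℝ) (γ : Measure (ℝ × ℝ)) [IsProbabilityMeasure γ]
    (hγ1 : γ.map Prod.fst = P) (hγ2 : γ.map Prod.snd = Q)
    (m1 : Integrable (fun z : ℝ × ℝ => z.1 ^ 2) γ)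
    (m2 : Integrable (fun z : ℝ × ℝ => z.2 ^ 2) γ) :
    ∫ z, (z.1 - z.2) ^ 2 ∂γ
      = (∫ x, x ^ 2 ∂P) + (∫ x, x ^ 2 ∂Q) - 2 * ∫ z, z.1 * z.2 ∂γ := by
  have i12 : Integrable (fun z : ℝ × ℝ => z.1 ^ 2 + z.2 ^ 2) γ := m1.add m2
  have mmul : Integrable (fun z : ℝ × ℝ => z.1 * z.2) γ := by
    refine Integrable.mono' i12
      ((measurable_fst.mul measurable_snd).aestronglyMeasurable)
      (Eventually.of_forall ?_)
    intro z
    rw [Real.norm_eq_abs, abs_mul]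
    nlinarith [sq_nonneg (|z.1| - |z.2|), sq_abs z.1, sq_abs z.2, abs_nonneg z.1, abs_nonneg z.2]
  have key : ∀ z : ℝ × ℝ, (z.1 - z.2) ^ 2 = z.1 ^ 2 + z.2 ^ 2 - 2 * (z.1 * z.2) := by
    intro z; ring
  rw [integral_congr_ae (Eventually.of_forall key),
    integral_sub i12 (mmul.const_mul 2), integral_add m1 m2, integral_const_mul]
  have hPm : ∫ x, x ^ 2 ∂P = ∫ z : ℝ × ℝ, z.1 ^ 2 ∂γ := by
    rw [← hγ1, integral_map measurable_fst.aemeasurable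
      (continuous_pow 2).measurable.aestronglyMeasurable]
  have hQm : ∫ x, x ^ 2 ∂Q = ∫ z : ℝ × ℝ, z.2 ^ 2 ∂γ := by
    rw [← hγ2, integral_map measurable_snd.aemeasurable
      (continuous_pow 2).measurable.aestronglyMeasurable]
  rw [hPm, hQm]

/-! ### The one-dimensional Wasserstein identity -/

theorem W2sq_explicit (P : Measure ℝ) [IsProbabilityMeasure P] (hP : MemLp id 2 P)
    (f g : ℝ → ℝ) (hf : Measurable f) (hg : Measurable g)
    (hfm : MonotoneOn f (Ioo 0 1)) (hgm : MonotoneOn g (Ioo 0 1))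
    (hfP : unif01.map f = P) (hg2 : MemLp g 2 unif01) :
    W2sq P (unif01.map g) = ∫ u, (f u - g u) ^ 2 ∂unif01 := by
  set Q := unif01.map g with hQ
  haveI : IsProbabilityMeasure Q := Measure.isProbabilityMeasure_map hg.aemeasurable
  set Γ := unif01.map (fun u => (f u, g u)) with hΓdef
  haveI : IsProbabilityMeasure Γ := Measure.isProbabilityMeasure_map (hf.prodMk hg).aemeasurable
  have hf2 : MemLp f 2 unif01 := by
    have hP' := hP
    rw [← hfP] at hP'
    simpa using (memLp_map_measure_iff aestronglyMeasurable_id hf.aemeasurable).1 hP'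
  have hΓ1 : Γ.map Prod.fst = P := by
    rw [hΓdef, Measure.map_map measurable_fst (hf.prodMk hg)]
    exact hfP
  have hΓ2 : Γ.map Prod.snd = Q := by
    rw [hΓdef, Measure.map_map measurable_snd (hf.prodMk hg)]
    rfl
  have M1 : Integrable (fun z : ℝ × ℝ => z.1 ^ 2) Γ := by
    rw [hΓdef, integrable_map_measure (measurable_fst.pow_const 2).aestronglyMeasurable
      (hf.prodMk hg).aemeasurable]
    simpa [Function.comp_def] using hf2.integrable_sq
  have M2 : Integrable (fun z : ℝ × ℝ => z.2 ^ 2) Γ := by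
    rw [hΓdef, integrable_map_measure (measurable_snd.pow_const 2).aestronglyMeasurable
      (hf.prodMk hg).aemeasurable]
    simpa [Function.comp_def] using hg2.integrable_sq
  have hmin : ∀ t s : ℝ, Γ {z : ℝ × ℝ | t < z.1 ∧ s < z.2} = min (P (Ioi t)) (Q (Ioi s)) := by
    intro t s
    rw [hΓdef, hQ, ← hfP]
    exact comonotone_min f g hf hg hfm hgm t s
  have costΓ : ∫ z, (z.1 - z.2) ^ 2 ∂Γ = ∫ u, (f u - g u) ^ 2 ∂unif01 := by
    rw [hΓdef, integral_map (hf.prodMk hg).aemeasurable (f := fun z : ℝ × ℝ => (z.1 - z.2) ^ 2)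
      ((measurable_fst.sub measurable_snd).pow_const 2).aestronglyMeasurable]
  have hmemΓ : (∫ u, (f u - g u) ^ 2 ∂unif01) ∈
      { c : ℝ | ∃ γ : Measure (ℝ × ℝ),
        γ.map Prod.fst = P ∧ γ.map Prod.snd = Q ∧ c = ∫ z, (z.1 - z.2) ^ 2 ∂γ } :=
    ⟨Γ, hΓ1, hΓ2, costΓ.symm⟩
  have hbdd : BddBelow { c : ℝ | ∃ γ : Measure (ℝ × ℝ),
      γ.map Prod.fst = P ∧ γ.map Prod.snd = Q ∧ c = ∫ z, (z.1 - z.2) ^ 2 ∂γ } := by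
    refine ⟨0, ?_⟩
    rintro c ⟨γ', _, _, rfl⟩
    exact integral_nonneg (fun z => sq_nonneg _)
  rw [W2sq]
  apply le_antisymm
  · exact csInf_le hbdd hmemΓ
  · apply le_csInf ⟨_, hmemΓ⟩
    rintro c ⟨γ', hγ1, hγ2, rfl⟩
    haveI : IsProbabilityMeasure γ' := by
      constructor
      have h : γ'.map Prod.fst Set.univ = 1 := by rw [hγ1]; exact measure_univ
      rwa [Measure.map_apply measurable_fst MeasurableSet.univ, preimage_univ] at h
    have m1 : Integrable (fun z : ℝ × ℝ => z.1 ^ 2) γ' := by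
      have h := hP.integrable_sq
      rw [← hγ1] at h
      have := (integrable_map_measure (continuous_pow 2).measurable.aestronglyMeasurable
        measurable_fst.aemeasurable).1 (by simpa using h)
      simpa [Function.comp_def] using this
    have m2 : Integrable (fun z : ℝ × ℝ => z.2 ^ 2) γ' := by
      have hQ2 : Integrable (fun x : ℝ => x ^ 2) Q := by
        rw [hQ, integrable_map_measure (continuous_pow 2).measurable.aestronglyMeasurable
          hg.aemeasurable]

        simpa [Function.comp_def] using hg2.integrable_sq
      rw [← hγ2] at hQ2
      have := (integrable_map_measure (continuous_pow 2).measurable.aestronglyMeasurable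
        measurable_snd.aemeasurable).1 (by simpa using hQ2)
      simpa [Function.comp_def] using this
    rw [← costΓ, cost_expand P Q γ' hγ1 hγ2 m1 m2, cost_expand P Q Γ hΓ1 hΓ2 M1 M2]
    have := hoeffding_le γ' Γ P Q hγ1 hγ2 hΓ1 hΓ2 m1 m2 M1 M2 hmin
    linarith

/-! ### Main theorem -/

/-- **Explicit barycenter value.** For the quantile-average barycenter `ν̄`,
`Σ_s π_s W₂²(μ_s, ν̄) = Σ_s π_s ∫₀¹ |F_{μ_s}⁻¹(u) − Σ_t π_t F_{μ_t}⁻¹(u)|² du`. -/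
theorem barycenter_value_explicit
    (k : ℕ) (hk : 0 < k)
    (μ : Fin k → Measure ℝ) (hμ : ∀ s, IsProbabilityMeasure (μ s))
    (hμ2 : ∀ s, MemLp id 2 (μ s))
    (π : Fin k → ℝ) (hπpos : ∀ s, 0 < π s) (hπsum : ∑ s, π s = 1)
    (νbar : Measure ℝ)
    (hνbar : νbar = unif01.map (fun u => ∑ s, π s * quantile' (μ s) u)) :
    ∑ s, π s * W2sq (μ s) νbar
      = ∑ s, π s * ∫ u, (quantile' (μ s) u - ∑ t, π t * quantile' (μ t) u) ^ 2 ∂unif01 := by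
  classical
  set qbar : ℝ → ℝ := fun u => ∑ t, π t * qf (μ t) u with hqbar
  have hqmeas : Measurable qbar := by
    apply Finset.measurable_sum
    intro t _
    haveI := hμ t
    exact qf_measurable.const_mul (π t)
  have hqmono : MonotoneOn qbar (Ioo 0 1) := by
    intro a ha b hb hab
    apply Finset.sum_le_sum
    intro t _
    haveI := hμ t
    exact mul_le_mul_of_nonneg_left (qf_monotoneOn ha hb hab) (hπpos t).le
  have hqL2 : MemLp qbar 2 unif01 := by
    apply memLp_finset_sum
    intro t _
    haveI := hμ t
    exact (memLp_qf (hμ2 t)).const_mul (π t)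
  have hae : ∀ᵐ u ∂unif01, u ∈ Ioo (0:ℝ) 1 := by
    unfold unif01
    exact ae_restrict_mem measurableSet_Ioo
  have hνbar' : νbar = unif01.map qbar := by
    rw [hνbar]
    apply Measure.map_congr
    filter_upwards [hae] with u hu
    refine Finset.sum_congr rfl (fun t _ => ?_)
    rw [qf, if_pos hu]
  refine Finset.sum_congr rfl (fun s _ => ?_)
  haveI := hμ s
  congr 1
  have h1 : W2sq (μ s) νbar = ∫ u, (qf (μ s) u - qbar u) ^ 2 ∂unif01 := by
    rw [hνbar']
    exact W2sq_explicit (μ s) (hμ2 s) (qf (μ s)) qbar qf_measurable hqmeas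
      qf_monotoneOn hqmono map_qf hqL2
  rw [h1]
  apply integral_congr_ae
  filter_upwards [hae] with u hu
  have e1 : qf (μ s) u = quantile' (μ s) u := if_pos hu
  have e2 : qbar u = ∑ t, π t * quantile' (μ t) u :=
    Finset.sum_congr rfl (fun t _ => by rw [qf, if_pos hu])
  rw [e1, e2]
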